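/- For 0 < α < 4/27, with a_α, Γ_α as above, the identity f_α(z)·e^{−αΓ_α(z)} = ∫_z^{a_α} (1/(3z'^{2/3}))·e^{−αΓ_α(z')} dz' holds for all 0 ≤ z ≤ a_α; in particular ∫₀^{a_α} z^{−2/3} e^{−αΓ_α(z)} dz = 3. -/

import Mathlib

open MeasureTheory Set Filter Topology

/-- For `0 < α < 4/27`, with `a_α`, `Γ_α` as above, the identity
`f_α(z)·e^{−αΓ_α(z)} = ∫_z^{a_α} (1/(3z'^{2/3}))·e^{−αΓ_α(z')} dz'` holds for
`0 ≤ z ≤ a_α`; in particular `∫₀^{a_α} z^{−2/3} e^{−αΓ_α(z)} dz = 3`. -/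
theorem stmt_16 (α a : ℝ) (hα : 0 < α) (hα2 : α < 4/27)
    (f Γ : ℝ → ℝ)
    (hf : f = fun z => 1 - z ^ ((1:ℝ)/3) + α * z)
    (ha1 : 1 < a) (ha : f a = 0) (hamin : ∀ z ∈ Set.Ioo (0:ℝ) a, f z ≠ 0)
    (hΓ : Γ = fun z => ∫ t in (0:ℝ)..z, 1 / f t) :
    (∀ z ∈ Set.Icc (0:ℝ) a,
      f z * Real.exp (-(α * Γ z)) =
        ∫ t in z..a, (1 / (3 * t ^ ((2:ℝ)/3))) * Real.exp (-(α * Γ t))) ∧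
    (∫ t in (0:ℝ)..a, t ^ (-(2:ℝ)/3) * Real.exp (-(α * Γ t))) = 3 := by
  have ha0 : (0:ℝ) < a := lt_trans one_pos ha1
  have hfc : Continuous f := by
    rw [hf]
    exact (continuous_const.sub (Real.continuous_rpow_const (by norm_num))).add
      (continuous_const.mul continuous_id)
  have hf0 : f 0 = 1 := by
    rw [hf]; simp [Real.zero_rpow (by norm_num : (1:ℝ)/3 ≠ 0)]
  -- positivity of f on [0, a)
  have hfpos : ∀ z ∈ Set.Ico (0:ℝ) a, 0 < f z := by
    intro z hz
    rcases eq_or_lt_of_le hz.1 with h0 | h0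
    · rw [← h0, hf0]; norm_num
    by_contra hle
    push_neg at hle
    have hne := hamin z ⟨h0, hz.2⟩
    have hlt : f z < 0 := lt_of_le_of_ne hle hne
    have hmem : (0:ℝ) ∈ Set.Ioo (f z) (f 0) := ⟨hlt, by rw [hf0]; norm_num⟩
    obtain ⟨c, hc, hfc0⟩ := intermediate_value_Ioo' (le_of_lt h0) hfc.continuousOn hmem
    exact hamin c ⟨hc.1, hc.2.trans hz.2⟩ hfc0
  have hinvc : ContinuousOn (fun t => 1 / f t) (Set.Ico 0 a) :=
    continuousOn_const.div hfc.continuousOn (fun t ht => (hfpos t ht).ne')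
  have hΓint : ∀ z, 0 ≤ z → z < a →
      IntervalIntegrable (fun t => 1 / f t) volume 0 z := by
    intro z hz0 hza
    apply ContinuousOn.intervalIntegrable
    apply hinvc.mono
    rw [Set.uIcc_of_le hz0]
    exact fun t ht => ⟨ht.1, lt_of_le_of_lt ht.2 hza⟩
  have hΓderiv : ∀ z ∈ Set.Ioo (0:ℝ) a, HasDerivAt Γ (1 / f z) z := by
    intro z hz
    rw [hΓ]
    have hmeas : StronglyMeasurableAtFilter (fun t => 1 / f t) (nhds z) volume := by
      refine ContinuousOn.stronglyMeasurableAtFilter isOpen_Ioo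
        (hinvc.mono ?_) z hz
      exact fun t ht => ⟨le_of_lt ht.1, ht.2⟩
    have hcz : ContinuousAt (fun t => 1 / f t) z :=
      ContinuousAt.div continuousAt_const hfc.continuousAt
        (hfpos z ⟨le_of_lt hz.1, hz.2⟩).ne'
    exact intervalIntegral.integral_hasDerivAt_right
      (hΓint z (le_of_lt hz.1) hz.2) hmeas hcz
  have hΓ0 : Γ 0 = 0 := by rw [hΓ]; simp
  have hΓnn : ∀ z ∈ Set.Icc (0:ℝ) a, 0 ≤ Γ z := by
    intro z hz
    rw [hΓ]
    apply intervalIntegral.integral_nonneg hz.1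
    intro t ht
    rcases eq_or_lt_of_le (ht.2.trans hz.2) with h | h
    · rw [h, ha]; simp
    · exact le_of_lt (div_pos one_pos (hfpos t ⟨ht.1, h⟩))
  set g : ℝ → ℝ := fun z => f z * Real.exp (-(α * Γ z)) with hg
  set H : ℝ → ℝ := fun t => 1 / (3 * t ^ ((2:ℝ)/3)) * Real.exp (-(α * Γ t)) with hH
  -- continuity of H on (0, a)
  have hΓcontAt : ∀ t ∈ Set.Ioo (0:ℝ) a, ContinuousAt Γ t := fun t ht =>
    (hΓderiv t ht).continuousAt
  have hHcontAt : ∀ t ∈ Set.Ioo (0:ℝ) a, ContinuousAt H t := by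
    intro t ht
    have h1 : ContinuousAt (fun t : ℝ => 1 / (3 * t ^ ((2:ℝ)/3))) t := by
      apply ContinuousAt.div continuousAt_const
      · exact continuousAt_const.mul (Real.continuousAt_rpow_const t _ (Or.inr (by norm_num)))
      · have := Real.rpow_pos_of_pos ht.1 ((2:ℝ)/3)
        positivity
    exact h1.mul ((Real.continuous_exp.continuousAt).comp
      (((hΓcontAt t ht).const_mul α).neg))
  -- derivative of g on (0, a)
  have hgderiv : ∀ z ∈ Set.Ioo (0:ℝ) a, HasDerivAt g (-(H z)) z := by
    intro z hz
    have hz0 : z ≠ 0 := ne_of_gt hz.1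
    have hfz : (0:ℝ) < f z := hfpos z ⟨le_of_lt hz.1, hz.2⟩
    have hfd : HasDerivAt f (-(1/3 * z ^ ((1:ℝ)/3 - 1)) + α) z := by
      rw [hf]
      have h1 : HasDerivAt (fun z : ℝ => z ^ ((1:ℝ)/3)) ((1:ℝ)/3 * z ^ ((1:ℝ)/3 - 1)) z :=
        Real.hasDerivAt_rpow_const (Or.inl hz0)
      have h2 := ((hasDerivAt_const z (1:ℝ)).sub h1).add ((hasDerivAt_id z).const_mul α)
      exact h2.congr_deriv (by ring)
    have hed : HasDerivAt (fun w => Real.exp (-(α * Γ w)))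
        (Real.exp (-(α * Γ z)) * -(α * (1 / f z))) z :=
      (((hΓderiv z hz).const_mul α).neg).exp
    have hmul := hfd.mul hed
    refine hmul.congr_deriv ?_
    have hz23 : z ^ ((1:ℝ)/3 - 1) = (z ^ ((2:ℝ)/3))⁻¹ := by
      rw [show (1:ℝ)/3 - 1 = -(2/3) by norm_num, Real.rpow_neg (le_of_lt hz.1)]
    have hzp : (0:ℝ) < z ^ ((2:ℝ)/3) := Real.rpow_pos_of_pos hz.1 _
    simp only [hH, hz23]
    field_simp
    ring
  -- integrability of H on (0, a]
  have hbound_int : IntervalIntegrable (fun t : ℝ => 1/3 * t ^ (-(2:ℝ)/3)) volume 0 a :=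
    (intervalIntegral.intervalIntegrable_rpow' (by norm_num)).const_mul _
  have hHle : ∀ t ∈ Set.Ioc (0:ℝ) a, ‖H t‖ ≤ 1/3 * t ^ (-(2:ℝ)/3) := by
    intro t ht
    have htp : (0:ℝ) < t ^ ((2:ℝ)/3) := Real.rpow_pos_of_pos ht.1 _
    have hexp : Real.exp (-(α * Γ t)) ≤ 1 := by
      rw [Real.exp_le_one_iff]
      have := hΓnn t ⟨le_of_lt ht.1, ht.2⟩
      nlinarith
    have hHnn : 0 ≤ H t := by
      simp only [hH]
      positivity
    rw [Real.norm_eq_abs, abs_of_nonneg hHnn]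
    have hrw : t ^ (-(2:ℝ)/3) = (t ^ ((2:ℝ)/3))⁻¹ := by
      rw [show (-(2:ℝ))/3 = -(2/3) by norm_num, Real.rpow_neg (le_of_lt ht.1)]
    simp only [hH]
    rw [hrw]
    calc 1 / (3 * t ^ ((2:ℝ)/3)) * Real.exp (-(α * Γ t))
        ≤ 1 / (3 * t ^ ((2:ℝ)/3)) * 1 := by
          apply mul_le_mul_of_nonneg_left hexp
          positivity
      _ = 1/3 * (t ^ ((2:ℝ)/3))⁻¹ := by rw [mul_one, one_div, mul_inv]; ring
  have hHIoc : IntegrableOn H (Set.Ioc 0 a) volume := by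
    rw [integrableOn_Ioc_iff_integrableOn_Ioo]
    have hHcon : ContinuousOn H (Set.Ioo 0 a) :=
      fun t ht => (hHcontAt t ht).continuousWithinAt
    have hmeasH : AEStronglyMeasurable H (volume.restrict (Set.Ioo 0 a)) :=
      hHcon.aestronglyMeasurable measurableSet_Ioo
    have hbInt : IntegrableOn (fun t : ℝ => 1/3 * t ^ (-(2:ℝ)/3)) (Set.Ioo 0 a) volume := by
      have := (intervalIntegrable_iff_integrableOn_Ioc_of_le (le_of_lt ha0)).mp hbound_int
      rw [← integrableOn_Ioc_iff_integrableOn_Ioo]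
      exact this
    apply Integrable.mono' hbInt hmeasH
    filter_upwards [ae_restrict_mem measurableSet_Ioo] with t ht
    exact hHle t ⟨ht.1, le_of_lt ht.2⟩
  have hHii : ∀ z b, 0 ≤ z → z ≤ b → b ≤ a → IntervalIntegrable H volume z b := by
    intro z b hz hzb hba
    rw [intervalIntegrable_iff_integrableOn_Ioc_of_le hzb]
    exact hHIoc.mono_set (Set.Ioc_subset_Ioc hz hba)
  -- FTC on closed subintervals of (0, a)
  have key : ∀ z b, 0 < z → z ≤ b → b < a → g z - g b = ∫ t in z..b, H t := by
    intro z b hz hzb hba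
    have hderiv : ∀ x ∈ Set.uIcc z b, HasDerivAt g (-(H x)) x := by
      intro x hx
      rw [Set.uIcc_of_le hzb] at hx
      exact hgderiv x ⟨lt_of_lt_of_le hz hx.1, lt_of_le_of_lt hx.2 hba⟩
    have hint : IntervalIntegrable (fun x => -(H x)) volume z b :=
      (hHii z b (le_of_lt hz) hzb (le_of_lt hba)).neg
    have := intervalIntegral.integral_eq_sub_of_hasDerivAt hderiv hint
    rw [intervalIntegral.integral_neg] at this
    linarith
  -- main identity on (0, a)
  have main : ∀ z, 0 < z → z < a → g z = ∫ t in z..a, H t := by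
    intro z hz hza
    have hne : (𝓝[Set.Ioo z a] a).NeBot := right_nhdsWithin_Ioo_neBot hza
    have hg0 : Tendsto g (𝓝[Set.Ioo z a] a) (𝓝 0) := by
      have hfa : Tendsto f (𝓝[Set.Ioo z a] a) (𝓝 0) := by
        have := hfc.continuousAt (x := a)
        rw [ContinuousAt, ha] at this
        exact this.mono_left nhdsWithin_le_nhds
      apply tendsto_of_tendsto_of_tendsto_of_le_of_le' tendsto_const_nhds hfa
      · filter_upwards [self_mem_nhdsWithin] with b hb
        have hfb := hfpos b ⟨le_of_lt (lt_trans hz hb.1), hb.2⟩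
        simp only [hg]
        positivity
      · filter_upwards [self_mem_nhdsWithin] with b hb
        have hΓb := hΓnn b ⟨le_of_lt (lt_trans hz hb.1), le_of_lt hb.2⟩
        have hexp : Real.exp (-(α * Γ b)) ≤ 1 := by
          rw [Real.exp_le_one_iff]; nlinarith
        have hfb := hfpos b ⟨le_of_lt (lt_trans hz hb.1), hb.2⟩
        simp only [hg]
        nlinarith
    have hint0 : Tendsto (fun b => ∫ t in b..a, H t) (𝓝[Set.Ioo z a] a) (𝓝 0) := by
      set C : ℝ := 1 / (3 * z ^ ((2:ℝ)/3)) with hC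
      have hzp : (0:ℝ) < z ^ ((2:ℝ)/3) := Real.rpow_pos_of_pos hz _
      apply squeeze_zero_norm' (a := fun b => C * |a - b|)
      · filter_upwards [self_mem_nhdsWithin] with b hb
        apply intervalIntegral.norm_integral_le_of_norm_le_const
        intro x hx
        rw [Set.uIoc_of_le (le_of_lt hb.2)] at hx
        have hxz : z < x := lt_trans hb.1 hx.1
        have hxp : (0:ℝ) < x := lt_trans hz hxz
        have hxa : x ≤ a := hx.2
        have hΓx := hΓnn x ⟨le_of_lt hxp, hxa⟩
        have hexp : Real.exp (-(α * Γ x)) ≤ 1 := by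
          rw [Real.exp_le_one_iff]; nlinarith
        have hxp2 : (0:ℝ) < x ^ ((2:ℝ)/3) := Real.rpow_pos_of_pos hxp _
        have hmono : z ^ ((2:ℝ)/3) ≤ x ^ ((2:ℝ)/3) :=
          Real.rpow_le_rpow (le_of_lt hz) (le_of_lt hxz) (by norm_num)
        have hHnn : 0 ≤ H x := by simp only [hH]; positivity
        rw [Real.norm_eq_abs, abs_of_nonneg hHnn]
        simp only [hH, hC]
        calc 1 / (3 * x ^ ((2:ℝ)/3)) * Real.exp (-(α * Γ x))
            ≤ 1 / (3 * x ^ ((2:ℝ)/3)) * 1 := by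
              apply mul_le_mul_of_nonneg_left hexp; positivity
          _ ≤ 1 / (3 * z ^ ((2:ℝ)/3)) := by
              rw [mul_one]
              apply div_le_div_of_nonneg_left one_pos.le (by positivity)
              nlinarith
      · have : Tendsto (fun b : ℝ => C * |a - b|) (𝓝 a) (𝓝 (C * |a - a|)) := by
          apply Tendsto.const_mul
          exact (continuous_abs.comp (continuous_const.sub continuous_id)).tendsto a
        simpa using this.mono_left nhdsWithin_le_nhds
    have heq : ∀ b ∈ Set.Ioo z a,
        g b = g z - ((∫ t in z..a, H t) - ∫ t in b..a, H t) := by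
      intro b hb
      have hadd := intervalIntegral.integral_add_adjacent_intervals
        (hHii z b (le_of_lt hz) (le_of_lt hb.1) (le_of_lt hb.2))
        (hHii b a (le_of_lt (lt_trans hz hb.1)) (le_of_lt hb.2) le_rfl)
      have hk := key z b hz (le_of_lt hb.1) hb.2
      linarith
    have h2 : Tendsto g (𝓝[Set.Ioo z a] a)
        (𝓝 (g z - ((∫ t in z..a, H t) - 0))) := by
      have : Tendsto (fun b => g z - ((∫ t in z..a, H t) - ∫ t in b..a, H t))
          (𝓝[Set.Ioo z a] a) (𝓝 (g z - ((∫ t in z..a, H t) - 0))) :=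
        tendsto_const_nhds.sub (tendsto_const_nhds.sub hint0)
      apply this.congr'
      filter_upwards [self_mem_nhdsWithin] with b hb
      exact (heq b hb).symm
    have := tendsto_nhds_unique hg0 h2
    linarith
  -- value at 0 : ∫_0^a H = 1
  have hg00 : g 0 = 1 := by simp only [hg, hf0, hΓ0]; simp
  have hint_a : (∫ t in (0:ℝ)..a, H t) = 1 := by
    have hne : (𝓝[Set.Ioo (0:ℝ) 1] (0:ℝ)).NeBot := left_nhdsWithin_Ioo_neBot one_pos
    -- Γ continuous on [0,1]
    have hΓcont : ContinuousOn Γ (Set.Icc (0:ℝ) 1) := by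
      rw [hΓ]
      have h1 : IntegrableOn (fun t => 1 / f t) (Set.uIcc (0:ℝ) 1) volume := by
        rw [Set.uIcc_of_le one_pos.le]
        apply (hinvc.mono (fun t ht => ⟨ht.1, lt_of_le_of_lt ht.2 ha1⟩)).integrableOn_compact
          isCompact_Icc
      have := intervalIntegral.continuousOn_primitive_interval h1
      rwa [Set.uIcc_of_le one_pos.le] at this
    have hgc : Tendsto g (𝓝[Set.Ioo (0:ℝ) 1] 0) (𝓝 1) := by
      have hc : ContinuousWithinAt g (Set.Icc (0:ℝ) 1) 0 := by
        apply ContinuousWithinAt.mul hfc.continuousWithinAt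
        exact (Real.continuous_exp.continuousAt.comp_continuousWithinAt
          (((hΓcont 0 (by simp [zero_le_one])).const_smul α).neg))
      have := hc.tendsto
      rw [hg00] at this
      exact this.mono_left (nhdsWithin_mono _ Set.Ioo_subset_Icc_self)
    have hsm : Tendsto (fun z => ∫ t in (0:ℝ)..z, H t) (𝓝[Set.Ioo (0:ℝ) 1] 0) (𝓝 0) := by
      apply squeeze_zero_norm' (a := fun z => 3 * z ^ ((1:ℝ)/3) / 3)
      · filter_upwards [self_mem_nhdsWithin] with z hz
        have hcalc : (∫ t in (0:ℝ)..z, 1/3 * t ^ (-(2:ℝ)/3)) = 3 * z ^ ((1:ℝ)/3) / 3 := by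
          rw [intervalIntegral.integral_const_mul, integral_rpow (Or.inl (by norm_num))]
          norm_num
          ring
        have hb : ‖∫ t in (0:ℝ)..z, H t‖ ≤ |∫ t in (0:ℝ)..z, 1/3 * t ^ (-(2:ℝ)/3)| := by
          apply intervalIntegral.norm_integral_le_abs_of_norm_le
          · rw [Set.uIoc_of_le (le_of_lt hz.1)]
            filter_upwards [ae_restrict_mem measurableSet_Ioc] with t ht
            exact hHle t ⟨ht.1, le_of_lt (lt_of_le_of_lt ht.2 (lt_trans hz.2 ha1))⟩
          · exact hbound_int.mono_set (by
              rw [Set.uIcc_of_le (le_of_lt hz.1), Set.uIcc_of_le ha0.le]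
              exact Set.Icc_subset_Icc le_rfl (le_of_lt (lt_trans hz.2 ha1)))
        rw [hcalc] at hb
        calc ‖∫ t in (0:ℝ)..z, H t‖ ≤ |3 * z ^ ((1:ℝ)/3) / 3| := hb
          _ = 3 * z ^ ((1:ℝ)/3) / 3 := by
              rw [abs_of_nonneg]
              have := Real.rpow_nonneg (le_of_lt hz.1) ((1:ℝ)/3)
              positivity
      · have hc : ContinuousAt (fun z : ℝ => 3 * z ^ ((1:ℝ)/3) / 3) 0 := by
          exact ((continuousAt_const.mul (Real.continuousAt_rpow_const 0 _
            (Or.inr (by norm_num)))).div_const 3)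
        have := hc.tendsto
        rw [show (3:ℝ) * (0:ℝ) ^ ((1:ℝ)/3) / 3 = 0 by
          rw [Real.zero_rpow (by norm_num : (1:ℝ)/3 ≠ 0)]; ring] at this
        exact this.mono_left nhdsWithin_le_nhds
    have heq : ∀ z ∈ Set.Ioo (0:ℝ) 1,
        (∫ t in (0:ℝ)..a, H t) = (∫ t in (0:ℝ)..z, H t) + g z := by
      intro z hz
      have hza : z < a := lt_trans hz.2 ha1
      rw [main z hz.1 hza]
      exact (intervalIntegral.integral_add_adjacent_intervals
        (hHii 0 z le_rfl (le_of_lt hz.1) (le_of_lt hza))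
        (hHii z a (le_of_lt hz.1) (le_of_lt hza) le_rfl)).symm
    have h2 : Tendsto (fun z => (∫ t in (0:ℝ)..z, H t) + g z)
        (𝓝[Set.Ioo (0:ℝ) 1] 0) (𝓝 (0 + 1)) := hsm.add hgc
    have h3 : Tendsto (fun _ : ℝ => ∫ t in (0:ℝ)..a, H t)
        (𝓝[Set.Ioo (0:ℝ) 1] 0) (𝓝 (∫ t in (0:ℝ)..a, H t)) := tendsto_const_nhds
    have h4 : Tendsto (fun _ : ℝ => ∫ t in (0:ℝ)..a, H t)
        (𝓝[Set.Ioo (0:ℝ) 1] 0) (𝓝 (0 + 1)) := by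
      apply h2.congr'
      filter_upwards [self_mem_nhdsWithin] with z hz
      exact (heq z hz).symm
    have := tendsto_nhds_unique h3 h4
    linarith
  constructor
  · intro z hz
    rcases eq_or_lt_of_le hz.1 with h0 | h0
    · rw [← h0]
      show g 0 = _
      rw [hg00, ← hint_a]
    rcases eq_or_lt_of_le hz.2 with h1 | h1
    · rw [h1, ha]
      simp
    · exact main z h0 h1
  · have hcongr : (∫ t in (0:ℝ)..a, t ^ (-(2:ℝ)/3) * Real.exp (-(α * Γ t)))
        = ∫ t in (0:ℝ)..a, 3 * H t := by
      apply intervalIntegral.integral_congr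
      intro t ht
      rw [Set.uIcc_of_le ha0.le] at ht
      simp only [hH]
      rw [show (-(2:ℝ))/3 = -(2/3) by norm_num, Real.rpow_neg ht.1]
      rw [one_div, mul_inv]
      ring
    rw [hcongr, intervalIntegral.integral_const_mul, hint_a]
    norm_num
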